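/- Let p_X, p_Y, α_X, β_X, α_Y, β_Y be real numbers and set q_X = 1 − p_X, q_Y = 1 − p_Y. Define α_Z = (p_X α_X + q_X β_X)(p_Y α_Y + q_Y β_Y) + (p_X α_X + q_X β_X)(1 − α_Y − β_Y) + (1 − α_X − β_X)(p_Y α_Y + q_Y β_Y) and β_Z = (q_X α_X + p_X β_X)(q_Y α_Y + p_Y β_Y) + (q_X α_X + p_X β_X)(1 − α_Y − β_Y) + (1 − α_X − β_X)(q_Y α_Y + p_Y β_Y). Writing C_W = 1 − α_W − β_W and D_W = α_W − β_W for W ∈ {X, Y, Z}, the identity C_Z = (1/2)[1 − C_X − C_Y + 3 C_X C_Y − (2p_X − 1)(2p_Y − 1) D_X D_Y] holds. -/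
import Mathlib


/-- Fitch/Maddison recursion identity for C_Z. -/
theorem fitch_recurrence_C
    (pX pY aX bX aY bY qX qY aZ bZ : ℝ)
    (hqX : qX = 1 - pX) (hqY : qY = 1 - pY)
    (haZ : aZ = (pX * aX + qX * bX) * (pY * aY + qY * bY)
        + (pX * aX + qX * bX) * (1 - aY - bY)
        + (1 - aX - bX) * (pY * aY + qY * bY))
    (hbZ : bZ = (qX * aX + pX * bX) * (qY * aY + pY * bY)
        + (qX * aX + pX * bX) * (1 - aY - bY)
        + (1 - aX - bX) * (qY * aY + pY * bY)) :
    1 - aZ - bZ = (1 / 2) * (1 - (1 - aX - bX) - (1 - aY - bY)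
        + 3 * (1 - aX - bX) * (1 - aY - bY)
        - (2 * pX - 1) * (2 * pY - 1) * (aX - bX) * (aY - bY)) := by
  subst hqX hqY haZ hbZ; ring
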